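/- (Expander Mixing Lemma for edge-weighted graphs) Let G = (V, W) be an edge-weighted graph with symmetric nonnegative weight matrix W, generalized degrees d_i = ∑_j w_{ij} all positive, and total volume Vol(V) = ∑_i d_i = 1. Then for all subsets X, Y ⊆ V: |w(X,Y) − Vol(X)·Vol(Y)| ≤ ‖M_D‖ · sqrt(Vol(X)·Vol(Y)), where M_D = D^{-1/2} W D^{-1/2} − √d √dᵀ is the normalized modularity matrix and ‖M_D‖ is its spectral norm. -/

import Mathlib

open Matrix BigOperators

/-- Spectral norm of a square real matrix as sup of |xᵀAy| over unit vectors. -/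
noncomputable def specNorm {n : ℕ} (A : Matrix (Fin n) (Fin n) ℝ) : ℝ :=
  sSup {t | ∃ (x y : Fin n → ℝ),
    Real.sqrt (∑ i, x i ^ 2) = 1 ∧ Real.sqrt (∑ j, y j ^ 2) = 1 ∧
    t = |x ⬝ᵥ A.mulVec y|}

lemma specNorm_bdd {n : ℕ} (A : Matrix (Fin n) (Fin n) ℝ) :
    BddAbove {t | ∃ (x y : Fin n → ℝ),
    Real.sqrt (∑ i, x i ^ 2) = 1 ∧ Real.sqrt (∑ j, y j ^ 2) = 1 ∧
    t = |x ⬝ᵥ A.mulVec y|} := by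
  refine ⟨∑ i, ∑ j, |A i j|, ?_⟩
  rintro t ⟨x, y, hx, hy, rfl⟩
  have hx1 : ∑ i, x i ^ 2 = 1 := by
    have h := congrArg (· ^ 2) hx
    simpa [Real.sq_sqrt (Finset.sum_nonneg fun i _ => sq_nonneg (x i))] using h
  have hy1 : ∑ j, y j ^ 2 = 1 := by
    have h := congrArg (· ^ 2) hy
    simpa [Real.sq_sqrt (Finset.sum_nonneg fun j _ => sq_nonneg (y j))] using h
  have hxb : ∀ i, |x i| ≤ 1 := by
    intro i
    have h1 : x i ^ 2 ≤ 1 := by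
      rw [← hx1]
      exact Finset.single_le_sum (fun j _ => sq_nonneg (x j)) (Finset.mem_univ i)
    nlinarith [abs_nonneg (x i), sq_abs (x i)]
  have hyb : ∀ j, |y j| ≤ 1 := by
    intro j
    have h1 : y j ^ 2 ≤ 1 := by
      rw [← hy1]
      exact Finset.single_le_sum (fun i _ => sq_nonneg (y i)) (Finset.mem_univ j)
    nlinarith [abs_nonneg (y j), sq_abs (y j)]
  calc |x ⬝ᵥ A.mulVec y| = |∑ i, ∑ j, x i * (A i j * y j)| := by
        simp [dotProduct, Matrix.mulVec, Finset.mul_sum]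
    _ ≤ ∑ i, |∑ j, x i * (A i j * y j)| := Finset.abs_sum_le_sum_abs _ _
    _ ≤ ∑ i, ∑ j, |x i * (A i j * y j)| :=
        Finset.sum_le_sum fun i _ => Finset.abs_sum_le_sum_abs _ _
    _ ≤ ∑ i, ∑ j, |A i j| := by
        refine Finset.sum_le_sum fun i _ => Finset.sum_le_sum fun j _ => ?_
        rw [abs_mul, abs_mul]
        calc |x i| * (|A i j| * |y j|) ≤ 1 * (|A i j| * 1) := by
              apply mul_le_mul (hxb i) _ (by positivity) zero_le_one
              exact mul_le_mul_of_nonneg_left (hyb j) (abs_nonneg _)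
          _ = |A i j| := by ring

/-- Expander Mixing Lemma for edge-weighted graphs. -/
theorem expander_mixing_weighted {n : ℕ} (W : Matrix (Fin n) (Fin n) ℝ)
    (hsym : W.IsSymm) (hnn : ∀ i j, 0 ≤ W i j)
    (d : Fin n → ℝ) (hd : ∀ i, d i = ∑ j, W i j)
    (hdpos : ∀ i, 0 < d i) (hvol : ∑ i, d i = 1)
    (MD : Matrix (Fin n) (Fin n) ℝ)
    (hMD : MD = fun i j => W i j / (Real.sqrt (d i) * Real.sqrt (d j))
                  - Real.sqrt (d i) * Real.sqrt (d j)) :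
    ∀ X Y : Finset (Fin n),
      |(∑ i ∈ X, ∑ j ∈ Y, W i j) - (∑ i ∈ X, d i) * (∑ j ∈ Y, d j)| ≤
        specNorm MD * Real.sqrt ((∑ i ∈ X, d i) * (∑ j ∈ Y, d j)) := by
  intro X Y
  rcases X.eq_empty_or_nonempty with rfl | hX
  · simp
  rcases Y.eq_empty_or_nonempty with rfl | hY
  · simp
  set VX := ∑ i ∈ X, d i with hVX
  set VY := ∑ j ∈ Y, d j with hVY
  have hVXpos : 0 < VX := Finset.sum_pos (fun i _ => hdpos i) hX
  have hVYpos : 0 < VY := Finset.sum_pos (fun j _ => hdpos j) hY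
  have hsVX : 0 < Real.sqrt VX := Real.sqrt_pos.mpr hVXpos
  have hsVY : 0 < Real.sqrt VY := Real.sqrt_pos.mpr hVYpos
  set x : Fin n → ℝ := fun i => if i ∈ X then Real.sqrt (d i) / Real.sqrt VX else 0 with hxdef
  set y : Fin n → ℝ := fun j => if j ∈ Y then Real.sqrt (d j) / Real.sqrt VY else 0 with hydef
  have hsq : ∀ i, Real.sqrt (d i) ^ 2 = d i := fun i => Real.sq_sqrt (hdpos i).le
  have hxnorm : Real.sqrt (∑ i, x i ^ 2) = 1 := by
    have h : ∑ i, x i ^ 2 = 1 := by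
      rw [hxdef]
      simp only [apply_ite (· ^ 2), div_pow, hsq, ne_eq, OfNat.ofNat_ne_zero, not_false_eq_true, zero_pow]
      rw [Finset.sum_ite_mem, Finset.univ_inter, ← Finset.sum_div,
        Real.sq_sqrt hVXpos.le, ← hVX]
      simp [div_self hVXpos.ne']
    rw [h, Real.sqrt_one]
  have hynorm : Real.sqrt (∑ j, y j ^ 2) = 1 := by
    have h : ∑ j, y j ^ 2 = 1 := by
      rw [hydef]
      simp only [apply_ite (· ^ 2), div_pow, hsq, ne_eq, OfNat.ofNat_ne_zero, not_false_eq_true, zero_pow]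
      rw [Finset.sum_ite_mem, Finset.univ_inter, ← Finset.sum_div,
        Real.sq_sqrt hVYpos.le, ← hVY]
      simp [div_self hVYpos.ne']
    rw [h, Real.sqrt_one]
  set S := (∑ i ∈ X, ∑ j ∈ Y, W i j) - VX * VY with hS
  have hdot : x ⬝ᵥ MD.mulVec y = S / (Real.sqrt VX * Real.sqrt VY) := by
    have expand : x ⬝ᵥ MD.mulVec y = ∑ i, ∑ j, x i * (MD i j * y j) := by
      simp [dotProduct, Matrix.mulVec, Finset.mul_sum]
    rw [expand]
    have step : ∀ i j, x i * (MD i j * y j) =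
        if i ∈ X then (if j ∈ Y then
          (W i j - d i * d j) / (Real.sqrt VX * Real.sqrt VY) else 0) else 0 := by
      intro i j
      by_cases hi : i ∈ X
      · by_cases hj : j ∈ Y
        · have hdi : Real.sqrt (d i) ≠ 0 := (Real.sqrt_pos.mpr (hdpos i)).ne'
          have hdj : Real.sqrt (d j) ≠ 0 := (Real.sqrt_pos.mpr (hdpos j)).ne'
          simp only [hxdef, hydef, hMD, hi, hj, if_true]
          have e1 : W i j / (Real.sqrt (d i) * Real.sqrt (d j))
              - Real.sqrt (d i) * Real.sqrt (d j)
              = (W i j - d i * d j) / (Real.sqrt (d i) * Real.sqrt (d j)) := by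
            rw [eq_div_iff (mul_ne_zero hdi hdj), sub_mul,
              div_mul_cancel₀ _ (mul_ne_zero hdi hdj)]
            nlinarith [hsq i, hsq j]
          rw [e1]
          field_simp
        · simp [hxdef, hydef, hi, hj]
      · simp [hxdef, hydef, hi]
    simp only [step]
    have h1 : ∀ i, (∑ j, if i ∈ X then (if j ∈ Y then
        (W i j - d i * d j) / (Real.sqrt VX * Real.sqrt VY) else 0) else 0)
        = if i ∈ X then ∑ j ∈ Y,
          (W i j - d i * d j) / (Real.sqrt VX * Real.sqrt VY) else 0 := by
      intro i
      split
      · rw [Finset.sum_ite_mem, Finset.univ_inter]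
      · simp
    simp only [h1]
    rw [Finset.sum_ite_mem, Finset.univ_inter]
    rw [hS]
    rw [show VX * VY = ∑ i ∈ X, ∑ j ∈ Y, d i * d j from Finset.sum_mul_sum X Y d d]
    rw [← Finset.sum_sub_distrib]
    simp only [← Finset.sum_sub_distrib, Finset.sum_div]
  have hmem : |x ⬝ᵥ MD.mulVec y| ∈ {t | ∃ (x y : Fin n → ℝ),
      Real.sqrt (∑ i, x i ^ 2) = 1 ∧ Real.sqrt (∑ j, y j ^ 2) = 1 ∧
      t = |x ⬝ᵥ MD.mulVec y|} := ⟨x, y, hxnorm, hynorm, rfl⟩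
  have hle : |x ⬝ᵥ MD.mulVec y| ≤ specNorm MD := le_csSup (specNorm_bdd MD) hmem
  have hsqrt : Real.sqrt (VX * VY) = Real.sqrt VX * Real.sqrt VY :=
    Real.sqrt_mul hVXpos.le VY
  rw [hdot, abs_div, abs_of_pos (mul_pos hsVX hsVY),
    div_le_iff₀ (mul_pos hsVX hsVY)] at hle
  calc |S| ≤ specNorm MD * (Real.sqrt VX * Real.sqrt VY) := hle
    _ = specNorm MD * Real.sqrt (VX * VY) := by rw [hsqrt]
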